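/- If G is a strongly connected, weight-balanced digraph with Laplacian L, then zero is a simple eigenvalue of L + Lᵀ. -/

import Mathlib

open Matrix BigOperators

/-- If `G` is a strongly connected, weight-balanced digraph with Laplacian `L`,
then zero is a simple eigenvalue of `L + Lᵀ`: the all-ones vector is in the kernel of
`L + Lᵀ` and the kernel is exactly the span of the all-ones vector. -/
theorem zero_simple_eigenvalue_of_strongly_connected_weight_balanced
    {n : ℕ} (A : Matrix (Fin n) (Fin n) ℝ)
    (hA : ∀ i j, 0 ≤ A i j)
    (hconn : ∀ i j : Fin n, i ≠ j → Relation.TransGen (fun a b => 0 < A a b) i j)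
    (hbal : ∀ i, ∑ j, A i j = ∑ j, A j i)
    (L : Matrix (Fin n) (Fin n) ℝ)
    (hL : L = Matrix.diagonal (fun i => ∑ j, A i j) - A) :
    (L + Lᵀ) *ᵥ (fun _ => (1 : ℝ)) = 0 ∧
    ∀ v : Fin n → ℝ, (L + Lᵀ) *ᵥ v = 0 → ∃ c : ℝ, v = fun _ => c := by
  constructor
  · subst hL
    funext i
    simp only [mulVec, dotProduct, transpose_apply, transpose, Matrix.add_apply, Matrix.sub_apply,
      diagonal, Matrix.add_apply, Matrix.sub_apply, of_apply, Pi.zero_apply, mul_one]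
    rw [Finset.sum_add_distrib, Finset.sum_sub_distrib, Finset.sum_sub_distrib]
    simp [Finset.sum_ite_eq, Finset.sum_ite_eq', hbal i]
  · intro v hv
    -- quadratic form vanishes
    have hQ : ∑ i, ∑ j, A i j * (v i - v j)^2 = 0 := by
      have hT : ∑ i, v i * (((L + Lᵀ) *ᵥ v) i) = 0 := by rw [hv]; simp
      rw [hL] at hT
      have hT' : (∑ i, ∑ j, A i j * v i ^ 2) + (∑ i, ∑ j, A j i * v i ^ 2)
          - (∑ i, ∑ j, A i j * (v i * v j)) - (∑ i, ∑ j, A j i * (v i * v j)) = 0 := by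
        rw [← hT]
        simp only [mulVec, dotProduct, transpose_apply, transpose, Matrix.add_apply, Matrix.sub_apply,
          diagonal, of_apply]
        rw [← Finset.sum_add_distrib, ← Finset.sum_sub_distrib, ← Finset.sum_sub_distrib]
        apply Finset.sum_congr rfl
        intro i _
        rw [Finset.mul_sum]
        have key : ∀ j, v i * ((((if i = j then (∑ k, A i k) else 0) - A i j
              + ((if j = i then (∑ k, A j k) else 0) - A j i))) * v j)
            = (if i = j then (∑ k, A i k) * (v i * v j) else 0)
              + (if j = i then (∑ k, A j k) * (v i * v j) else 0)
              - A i j * (v i * v j) - A j i * (v i * v j) := by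
          intro j; by_cases h : i = j
          · simp [h]; ring
          · simp [h, Ne.symm h]; ring
        simp only [key]
        rw [Finset.sum_sub_distrib, Finset.sum_sub_distrib, Finset.sum_add_distrib,
          Finset.sum_ite_eq, Finset.sum_ite_eq']
        simp only [Finset.mem_univ, if_true, ← Finset.sum_mul]
        rw [hbal i]; ring
      have hswap1 : (∑ i, ∑ j, A j i * v i ^ 2) = ∑ i, ∑ j, A i j * v j ^ 2 :=
        Finset.sum_comm
      have hswap2 : (∑ i, ∑ j, A j i * (v i * v j)) = ∑ i, ∑ j, A i j * (v i * v j) := by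
        rw [Finset.sum_comm]
        exact Finset.sum_congr rfl fun i _ => Finset.sum_congr rfl fun j _ => by ring
      have hS : (∑ i, ∑ j, A i j * v i ^ 2) = ∑ i, ∑ j, A i j * v j ^ 2 := by
        calc ∑ i, ∑ j, A i j * v i ^ 2 = ∑ i, (∑ j, A i j) * v i ^ 2 := by
                simp [Finset.sum_mul]
          _ = ∑ i, (∑ j, A j i) * v i ^ 2 := Finset.sum_congr rfl fun i _ => by rw [hbal i]
          _ = ∑ i, ∑ j, A j i * v i ^ 2 := by simp [Finset.sum_mul]
          _ = ∑ i, ∑ j, A i j * v j ^ 2 := Finset.sum_comm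
      have expand : ∑ i, ∑ j, A i j * (v i - v j)^2
          = (∑ i, ∑ j, A i j * v i ^ 2) + (∑ i, ∑ j, A i j * v j ^ 2)
            - 2 * (∑ i, ∑ j, A i j * (v i * v j)) := by
        rw [Finset.mul_sum, ← Finset.sum_add_distrib, ← Finset.sum_sub_distrib]
        apply Finset.sum_congr rfl; intro i _
        rw [Finset.mul_sum, ← Finset.sum_add_distrib, ← Finset.sum_sub_distrib]
        exact Finset.sum_congr rfl fun j _ => by ring
      rw [expand]
      rw [hswap1, hswap2, hS] at hT'
      linarith
    -- each term vanishes
    have hterm : ∀ i j, A i j * (v i - v j)^2 = 0 := by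
      have h1 : ∀ i ∈ Finset.univ, ∑ j, A i j * (v i - v j)^2 = 0 := by
        rw [← Finset.sum_eq_zero_iff_of_nonneg]
        · exact hQ
        · intro i _
          exact Finset.sum_nonneg fun j _ => mul_nonneg (hA i j) (sq_nonneg _)
      intro i j
      have h2 := (Finset.sum_eq_zero_iff_of_nonneg
        (fun j _ => mul_nonneg (hA i j) (sq_nonneg (v i - v j)))).mp
        (h1 i (Finset.mem_univ i)) j (Finset.mem_univ j)
      exact h2
    have hadj : ∀ a b : Fin n, 0 < A a b → v a = v b := by
      intro a b hab
      have := hterm a b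
      have h2 : (v a - v b)^2 = 0 := by
        rcases mul_eq_zero.mp this with h | h
        · exact absurd h (ne_of_gt hab)
        · exact h
      have := pow_eq_zero_iff (n := 2) (by norm_num) |>.mp h2
      linarith [sub_eq_zero.mp this]
    have htrans : ∀ i j : Fin n, Relation.TransGen (fun a b => 0 < A a b) i j → v i = v j := by
      intro i j h
      induction h with
      | single h => exact hadj _ _ h
      | tail _ h ih => exact ih.trans (hadj _ _ h)
    cases n with
    | zero => exact ⟨0, funext fun i => i.elim0⟩
    | succ m =>
      refine ⟨v 0, funext fun i => ?_⟩
      by_cases hi : i = 0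
      · rw [hi]
      · exact (htrans 0 i (hconn 0 i (Ne.symm hi))).symm
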